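/- In the reduction graph G, for every minimal MEG-set M of G, for every item index i and every copy index ℓ, either x_{i,ℓ} ∈ M or there exists a set index j with x_i ∈ S_j and S_{j,ℓ} ∈ M. -/

import Mathlib

/-- Edge `e` is monitored by the pair `x, y` if `x ≠ y` and `e` lies on
every shortest path between `x` and `y`. -/
def Monitors {V : Type*} (G : SimpleGraph V) (x y : V) (e : Sym2 V) : Prop :=
  x ≠ y ∧ ∀ p : G.Walk x y, p.length = G.dist x y → e ∈ p.edges

/-- `M` is a monitoring edge-geodetic set of `G`. -/
def IsMEGSet {V : Type*} (G : SimpleGraph V) (M : Set V) : Prop :=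
  ∀ e ∈ G.edgeSet, ∃ x ∈ M, ∃ y ∈ M, Monitors G x y e

/-- Vertices of the reduction graph built from a Set Cover instance with
`η` items, `h` sets and `k` copies of the incidence graph:
`item i ℓ` is the copy `x_{i,ℓ}`, `setv j ℓ` is the copy `S_{j,ℓ}`,
`y i`/`yp i` are `y_i`/`y'_i`, and `z j`/`zp j` are `z_j`/`z'_j`. -/
inductive RV (η h k : ℕ) where
  | item : Fin η → Fin k → RV η h k
  | setv : Fin h → Fin k → RV η h k
  | y : Fin η → RV η h k
  | yp : Fin η → RV η h k
  | z : Fin h → RV η h k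
  | zp : Fin h → RV η h k

/-- The (asymmetric) base relation describing the edges of the reduction graph. -/
def redRel {η h k : ℕ} (S : Fin h → Set (Fin η)) : RV η h k → RV η h k → Prop
  | .item i ℓ, .setv j m => ℓ = m ∧ i ∈ S j
  | .item i _, .y i' => i = i'
  | .y _, .y _ => True
  | .y i, .yp i' => i = i'
  | .setv j _, .z j' => j = j'
  | .z j, .zp j' => j = j'
  | _, _ => False

/-- The reduction graph `G` built from the Set Cover instance `S`. -/
def redGraph {η h k : ℕ} (S : Fin h → Set (Fin η)) : SimpleGraph (RV η h k) :=
  SimpleGraph.fromRel (redRel S)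

/-- `L = Y' ∪ Z'`, the set of degree-1 vertices of the reduction graph. -/
def Lset (η h k : ℕ) : Set (RV η h k) :=
  {v | ∃ i, v = .yp i} ∪ {v | ∃ j, v = .zp j}

section AuxMEG
variable {η h k : ℕ} {S : Fin h → Set (Fin η)}

lemma redGraph_adj {a b : RV η h k} :
    (redGraph S).Adj a b ↔ a ≠ b ∧ (redRel S a b ∨ redRel S b a) :=
  SimpleGraph.fromRel_adj _ _ _

lemma adj_item_y (i : Fin η) (ℓ : Fin k) : (redGraph S).Adj (.item i ℓ) (.y i) := by
  rw [redGraph_adj]; exact ⟨by simp, Or.inl rfl⟩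

lemma adj_item_setv {i : Fin η} {j : Fin h} (ℓ : Fin k) (hij : i ∈ S j) :
    (redGraph S).Adj (.item i ℓ) (.setv j ℓ) := by
  rw [redGraph_adj]; exact ⟨by simp, Or.inl ⟨rfl, hij⟩⟩

lemma adj_setv_z (j : Fin h) (ℓ : Fin k) : (redGraph S).Adj (.setv j ℓ) (.z j) := by
  rw [redGraph_adj]; exact ⟨by simp, Or.inl rfl⟩

lemma adj_y_y {i i' : Fin η} (hne : i ≠ i') :
    (redGraph S).Adj (RV.y i : RV η h k) (RV.y i') := by
  rw [redGraph_adj]; exact ⟨by simp [hne], Or.inl trivial⟩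

lemma adj_y_yp (i : Fin η) : (redGraph S).Adj (RV.y i : RV η h k) (RV.yp i) := by
  rw [redGraph_adj]; exact ⟨by simp, Or.inl rfl⟩

lemma adj_z_zp (j : Fin h) : (redGraph S).Adj (RV.z j : RV η h k) (RV.zp j) := by
  rw [redGraph_adj]; exact ⟨by simp, Or.inl rfl⟩

lemma adj_item_cases {i : Fin η} {ℓ : Fin k} {x : RV η h k}
    (hadj : (redGraph S).Adj (.item i ℓ) x) :
    x = .y i ∨ ∃ j, i ∈ S j ∧ x = .setv j ℓ := by
  rw [redGraph_adj] at hadj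
  obtain ⟨hne, hr | hr⟩ := hadj <;> cases x <;> simp [redRel] at hr
  · obtain ⟨rfl, hij⟩ := hr
    exact Or.inr ⟨_, hij, rfl⟩
  · exact Or.inl (by rw [hr])

lemma adj_setv_cases {j : Fin h} {ℓ : Fin k} {x : RV η h k}
    (hadj : (redGraph S).Adj (.setv j ℓ) x) :
    x = .z j ∨ ∃ i, i ∈ S j ∧ x = .item i ℓ := by
  rw [redGraph_adj] at hadj
  obtain ⟨hne, hr | hr⟩ := hadj <;> cases x <;> simp [redRel] at hr
  · exact Or.inl (by rw [hr])
  · obtain ⟨rfl, hij⟩ := hr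
    exact Or.inr ⟨_, hij, rfl⟩

open SimpleGraph Walk in
lemma core_reroute (hk : 2 ≤ k) {i : Fin η} {ℓ : Fin k} {u v : RV η h k}
    (w1 : (redGraph S).Walk u (.item i ℓ))
    (hab : (redGraph S).Adj (.item i ℓ) (.y i))
    (w2 : (redGraph S).Walk (.y i) v)
    (hpath : (w1.append (SimpleGraph.Walk.cons hab w2)).IsPath)
    (hu1 : u ≠ .item i ℓ) (hu2 : ∀ j, i ∈ S j → u ≠ .setv j ℓ) :
    ∃ p' : (redGraph S).Walk u v,
      (p'.length = w1.length + 1 + w2.length ∧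
        s(RV.item i ℓ, RV.y i) ∉ p'.edges)
      ∨ p'.length < w1.length + 1 + w2.length := by
  classical
  -- support and edge nodup facts
  have hsup := hpath.support_nodup
  rw [SimpleGraph.Walk.support_append, SimpleGraph.Walk.support_cons] at hsup
  simp only [List.tail_cons] at hsup
  -- hsup : (w1.support ++ w2.support).Nodup
  have hedg := hpath.isTrail.edges_nodup
  rw [SimpleGraph.Walk.edges_append, SimpleGraph.Walk.edges_cons] at hedg
  have he1 : s(RV.item i ℓ, RV.y i) ∉ w1.edges := by
    rcases List.nodup_append.mp hedg with ⟨-, -, hdisj⟩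
    intro hmem
    exact hdisj _ hmem _ (by simp) rfl
  have he2 : s(RV.item i ℓ, RV.y i) ∉ w2.edges := by
    rcases List.nodup_append.mp hedg with ⟨-, hnd2, -⟩
    exact (List.nodup_cons.mp hnd2).1
  have hw1nodup : w1.support.Nodup := (List.nodup_append.mp hsup).1
  have hdisj := (List.nodup_append.mp hsup).2.2
  -- decompose w1 from the item end
  obtain ⟨w, hadj, q, hr⟩ :=
    SimpleGraph.Walk.exists_eq_cons_of_ne (Ne.symm hu1) w1.reverse
  rcases adj_item_cases hadj with rfl | ⟨j, hij, rfl⟩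
  · -- w = y i : impossible, y i is in w2.support but w ∈ w1.support
    exfalso
    have hmem1 : (RV.y i : RV η h k) ∈ w1.support := by
      have : (RV.y i : RV η h k) ∈ w1.reverse.support := by
        rw [hr, SimpleGraph.Walk.support_cons]
        exact List.mem_cons_of_mem _ q.start_mem_support
      rwa [SimpleGraph.Walk.support_reverse, List.mem_reverse] at this
    exact hdisj _ hmem1 _ w2.start_mem_support rfl
  · -- w = setv j ℓ
    have huw : u ≠ RV.setv j ℓ := hu2 j hij
    obtain ⟨t, hadj2, q2, hq⟩ :=
      SimpleGraph.Walk.exists_eq_cons_of_ne (Ne.symm huw) q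
    -- t ≠ item i ℓ
    have htne : t ≠ RV.item i ℓ := by
      intro rfl'
      have hnd : w1.reverse.support.Nodup := by
        rw [SimpleGraph.Walk.support_reverse]
        exact List.nodup_reverse.mpr hw1nodup
      rw [hr, hq] at hnd
      simp only [SimpleGraph.Walk.support_cons, List.nodup_cons] at hnd
      exact hnd.1 (by
        subst rfl'
        exact List.mem_cons_of_mem _ q2.start_mem_support)
    -- length of w1
    have hlen1 : w1.length = q2.length + 2 := by
      have : w1.reverse.length = w1.length := SimpleGraph.Walk.length_reverse w1
      rw [hr, hq] at this
      simp only [SimpleGraph.Walk.length_cons] at this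
      omega
    -- e ∉ q2.edges
    have heq2 : s(RV.item i ℓ, RV.y i) ∉ q2.edges := by
      intro hmem
      apply he1
      have : s(RV.item i ℓ, RV.y i) ∈ w1.reverse.edges := by
        rw [hr, hq]
        simp only [SimpleGraph.Walk.edges_cons, List.mem_cons]
        exact Or.inr (Or.inr hmem)
      rwa [SimpleGraph.Walk.edges_reverse, List.mem_reverse] at this
    rcases adj_setv_cases hadj2 with rfl | ⟨i', hi'j, rfl⟩
    · -- t = z j : reroute through another copy ℓ'
      have : Nontrivial (Fin k) := Fin.nontrivial_iff_two_le.mpr hk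
      obtain ⟨ℓ', hℓ'⟩ := exists_ne ℓ
      refine ⟨q2.reverse.append
        ((SimpleGraph.Walk.cons (adj_setv_z j ℓ').symm
          (SimpleGraph.Walk.cons (adj_item_setv ℓ' hij).symm
            (SimpleGraph.Walk.cons (adj_item_y i ℓ')
              SimpleGraph.Walk.nil))).append w2), Or.inl ⟨?_, ?_⟩⟩
      · simp [SimpleGraph.Walk.length_append, SimpleGraph.Walk.length_cons,
          SimpleGraph.Walk.length_reverse, hlen1]
        omega
      · intro hmem
        simp only [SimpleGraph.Walk.edges_append, SimpleGraph.Walk.edges_cons,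
          SimpleGraph.Walk.edges_nil, List.mem_append, List.mem_cons,
          SimpleGraph.Walk.edges_reverse, List.mem_reverse,
          List.not_mem_nil, or_false] at hmem
        rcases hmem with hmem | (hmem | hmem | hmem) | hmem
        · exact heq2 hmem
        · rw [Sym2.eq_iff] at hmem
          rcases hmem with ⟨hc, -⟩ | ⟨hc, -⟩ <;> simp at hc
        · rw [Sym2.eq_iff] at hmem
          rcases hmem with ⟨hc, -⟩ | ⟨-, hc⟩
          · simp at hc
          · simp at hc
        · rw [Sym2.eq_iff] at hmem
          rcases hmem with ⟨hc, -⟩ | ⟨hc, -⟩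
          · injection hc with _ hcc; exact hℓ' hcc.symm
          · simp at hc
        · exact he2 hmem
    · -- t = item i' ℓ with i' ≠ i : strictly shorter walk exists
      have hii : i' ≠ i := by
        intro hii'
        exact htne (by rw [hii'])
      refine ⟨q2.reverse.append
        ((SimpleGraph.Walk.cons (adj_item_y i' ℓ)
          (SimpleGraph.Walk.cons (adj_y_y hii)
            SimpleGraph.Walk.nil)).append w2), Or.inr ?_⟩
      simp [SimpleGraph.Walk.length_append, SimpleGraph.Walk.length_cons,
        SimpleGraph.Walk.length_reverse, hlen1]
      omega

lemma walk_edge_split {V : Type*} {G : SimpleGraph V} {a b u v : V} :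
    ∀ (p : G.Walk u v), s(a, b) ∈ p.edges →
      (∃ (hab : G.Adj a b) (w1 : G.Walk u a) (w2 : G.Walk b v),
          p = w1.append (SimpleGraph.Walk.cons hab w2)) ∨
      (∃ (hba : G.Adj b a) (w1 : G.Walk u b) (w2 : G.Walk a v),
          p = w1.append (SimpleGraph.Walk.cons hba w2))
  | SimpleGraph.Walk.nil, he => by simp at he
  | SimpleGraph.Walk.cons h q, he => by
      rw [SimpleGraph.Walk.edges_cons, List.mem_cons] at he
      rcases he with he | he
      · rw [Sym2.eq_iff] at he
        rcases he with ⟨rfl, rfl⟩ | ⟨rfl, rfl⟩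
        · exact Or.inl ⟨h, SimpleGraph.Walk.nil, q, rfl⟩
        · exact Or.inr ⟨h, SimpleGraph.Walk.nil, q, rfl⟩
      · rcases walk_edge_split q he with ⟨hab, w1, w2, rfl⟩ | ⟨hba, w1, w2, rfl⟩
        · exact Or.inl ⟨hab, SimpleGraph.Walk.cons h w1, w2, rfl⟩
        · exact Or.inr ⟨hba, SimpleGraph.Walk.cons h w1, w2, rfl⟩

lemma reach_to_y (hsets : ∀ j, (S j).Nontrivial) (hk : 2 ≤ k) (i0 : Fin η) :
    ∀ u : RV η h k, (redGraph S).Reachable u (.y i0) := by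
  have hyy : ∀ i' : Fin η, (redGraph S).Reachable (RV.y i' : RV η h k) (.y i0) := by
    intro i'
    by_cases hne : i' = i0
    · subst hne; rfl
    · exact (adj_y_y hne).reachable
  have hitem : ∀ (i' : Fin η) (ℓ' : Fin k),
      (redGraph S).Reachable (RV.item i' ℓ' : RV η h k) (.y i0) :=
    fun i' ℓ' => (adj_item_y i' ℓ').reachable.trans (hyy i')
  have hsetv : ∀ (j : Fin h) (ℓ' : Fin k),
      (redGraph S).Reachable (RV.setv j ℓ' : RV η h k) (.y i0) := by
    intro j ℓ'
    obtain ⟨i1, hi1⟩ := (hsets j).nonempty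
    exact (adj_item_setv ℓ' hi1).symm.reachable.trans (hitem i1 ℓ')
  intro u
  cases u with
  | item i' ℓ' => exact hitem i' ℓ'
  | setv j ℓ' => exact hsetv j ℓ'
  | y i' => exact hyy i'
  | yp i' => exact (adj_y_yp i').symm.reachable.trans (hyy i')
  | z j => exact (adj_setv_z j ⟨0, by omega⟩).symm.reachable.trans (hsetv j ⟨0, by omega⟩)
  | zp j => exact
      ((adj_z_zp j).symm.reachable.trans
        ((adj_setv_z j ⟨0, by omega⟩).symm.reachable.trans (hsetv j ⟨0, by omega⟩)))

lemma not_monitors (hsets : ∀ j, (S j).Nontrivial) (hk : 2 ≤ k)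
    {i : Fin η} {ℓ : Fin k} {u v : RV η h k}
    (hu1 : u ≠ .item i ℓ) (hu2 : ∀ j, i ∈ S j → u ≠ .setv j ℓ)
    (hv1 : v ≠ .item i ℓ) (hv2 : ∀ j, i ∈ S j → v ≠ .setv j ℓ) :
    ¬ Monitors (redGraph S) u v s(RV.item i ℓ, RV.y i) := by
  rintro ⟨hne, hmon⟩
  have hreach : (redGraph S).Reachable u v :=
    (reach_to_y hsets hk i u).trans (reach_to_y hsets hk i v).symm
  obtain ⟨p, hp, hplen⟩ := hreach.exists_path_of_dist
  have he := hmon p hplen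
  rcases walk_edge_split p he with ⟨hab, w1, w2, rfl⟩ | ⟨hba, w1, w2, rfl⟩
  · have hdisteq : (redGraph S).dist u v = w1.length + 1 + w2.length := by
      rw [← hplen]; simp [SimpleGraph.Walk.length_append]; omega
    obtain ⟨p', hp'⟩ := core_reroute hk w1 hab w2 hp hu1 hu2
    rcases hp' with ⟨hlen', hnot⟩ | hlt
    · exact hnot (hmon p' (by rw [hlen', hdisteq]))
    · have := (redGraph S).dist_le p'
      omega
  · -- reversed configuration
    have hdisteq : (redGraph S).dist u v = w1.length + 1 + w2.length := by
      rw [← hplen]; simp [SimpleGraph.Walk.length_append]; omega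
    have hrev : (w1.append (SimpleGraph.Walk.cons hba w2)).reverse
        = w2.reverse.append (SimpleGraph.Walk.cons hba.symm w1.reverse) := by
      rw [SimpleGraph.Walk.reverse_append, SimpleGraph.Walk.reverse_cons,
        ← SimpleGraph.Walk.append_assoc, SimpleGraph.Walk.cons_append,
        SimpleGraph.Walk.nil_append]
    have hpath2 : (w2.reverse.append
        (SimpleGraph.Walk.cons hba.symm w1.reverse)).IsPath := by
      rw [← hrev]; exact hp.reverse
    obtain ⟨p', hp'⟩ := core_reroute hk w2.reverse hba.symm w1.reverse hpath2 hv1 hv2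
    rcases hp' with ⟨hlen', hnot⟩ | hlt
    · refine absurd (hmon p'.reverse ?_) ?_
      · rw [SimpleGraph.Walk.length_reverse, hlen', hdisteq,
          SimpleGraph.Walk.length_reverse, SimpleGraph.Walk.length_reverse]
        omega
      · rw [SimpleGraph.Walk.edges_reverse, List.mem_reverse]
        exact hnot
    · have := (redGraph S).dist_le p'.reverse
      rw [SimpleGraph.Walk.length_reverse] at this
      rw [SimpleGraph.Walk.length_reverse, SimpleGraph.Walk.length_reverse] at hlt
      omega


end AuxMEG

/-- For every minimal MEG-set `M` of the reduction graph, for every item `i`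
and every copy `ℓ`, either `x_{i,ℓ} ∈ M` or some `S_{j,ℓ} ∈ M` with `x_i ∈ S_j`. -/
theorem minimal_megset_covers_items {η h k : ℕ}
    (S : Fin h → Set (Fin η)) (hS : Function.Injective S)
    (hh : 2 ≤ h) (hk : 2 ≤ k)
    (hsets : ∀ j, (S j).Nontrivial)
    (hitems : ∀ i : Fin η, ∃ j j' : Fin h, j ≠ j' ∧ i ∈ S j ∧ i ∈ S j')
    (M : Set (RV η h k)) (hM : IsMEGSet (redGraph S) M)
    (hmin : ∀ v ∈ M, ¬ IsMEGSet (redGraph S) (M \ {v})) :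
    ∀ (i : Fin η) (ℓ : Fin k),
      RV.item i ℓ ∈ M ∨ ∃ j : Fin h, i ∈ S j ∧ RV.setv j ℓ ∈ M := by
  intro i ℓ
  by_contra hcon
  push_neg at hcon
  obtain ⟨hc1, hc2⟩ := hcon
  have hedge : s(RV.item i ℓ, RV.y i) ∈ (redGraph S).edgeSet :=
    (adj_item_y i ℓ)
  obtain ⟨u, huM, v, hvM, hmon⟩ := hM _ hedge
  refine not_monitors hsets hk ?_ ?_ ?_ ?_ hmon
  · rintro rfl; exact hc1 huM
  · rintro j hij rfl; exact hc2 j hij huM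
  · rintro rfl; exact hc1 hvM
  · rintro j hij rfl; exact hc2 j hij hvM
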